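/- Let Λ be an integral lattice in a Euclidean space E whose minimum m is even, and let x₀ ∈ Λ with N(x₀) = 2m − 2. Let 𝓔(x₀, 2m+2) = {y ∈ Λ : N(y) = 2m+2 and y ≡ x₀ (mod 2)}. Then every y ∈ 𝓔(x₀, 2m+2) satisfies ⟨y, x₀⟩ = 0, and for any y, y′ ∈ 𝓔(x₀, 2m+2) with y′ ≠ y and y′ ≠ −y one has ⟨y, y′⟩ = 2 or ⟨y, y′⟩ = −2. -/
import Mathlib


open scoped InnerProductSpace

/-- Let `Λ` be an integral lattice with even minimum `m`, and let
`x₀ ∈ Λ` with `N(x₀) = 2m − 2`. Every `y` of norm `2m+2` congruent to `x₀` mod `2`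
is orthogonal to `x₀`, and two such `y, y'` with `y' ≠ ±y` satisfy `⟨y, y'⟩ = ±2`. -/
theorem inner_eq_two_or_neg_two_on_E
    {E : Type*} [NormedAddCommGroup E] [InnerProductSpace ℝ E] [FiniteDimensional ℝ E]
    (Λ : AddSubgroup E) (hdisc : DiscreteTopology Λ) (m : ℝ)
    (hmin : IsLeast {r : ℝ | ∃ x ∈ Λ, x ≠ 0 ∧ ⟪x, x⟫_ℝ = r} m)
    (hintegral : ∀ x ∈ Λ, ∀ y ∈ Λ, ∃ k : ℤ, ⟪x, y⟫_ℝ = (k : ℝ))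
    (hmeven : ∃ k : ℤ, m = 2 * (k : ℝ))
    (x₀ : E) (hx₀ : x₀ ∈ Λ) (hx₀N : ⟪x₀, x₀⟫_ℝ = 2 * m - 2) :
    (∀ y ∈ Λ, ⟪y, y⟫_ℝ = 2 * m + 2 → (∃ z ∈ Λ, y - x₀ = (2 : ℝ) • z) →
        ⟪y, x₀⟫_ℝ = 0) ∧
    (∀ y ∈ Λ, ∀ y' ∈ Λ, ⟪y, y⟫_ℝ = 2 * m + 2 → ⟪y', y'⟫_ℝ = 2 * m + 2 →
        (∃ z ∈ Λ, y - x₀ = (2 : ℝ) • z) → (∃ z ∈ Λ, y' - x₀ = (2 : ℝ) • z) →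
        y' ≠ y → y' ≠ -y → (⟪y, y'⟫_ℝ = 2 ∨ ⟪y, y'⟫_ℝ = -2)) := by
  have min_le : ∀ z ∈ Λ, z ≠ 0 → m ≤ ⟪z, z⟫_ℝ := fun z hz h0 => hmin.2 ⟨z, hz, h0, rfl⟩
  have part1 : ∀ y ∈ Λ, ⟪y, y⟫_ℝ = 2 * m + 2 → (∃ z ∈ Λ, y - x₀ = (2 : ℝ) • z) →
      ⟪y, x₀⟫_ℝ = 0 := by
    rintro y hy hyN ⟨z, hz, hzy⟩
    have hy' : y = x₀ + (2 : ℝ) • z := sub_eq_iff_eq_add'.mp hzy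
    subst hy'
    have hz0 : z ≠ 0 := by
      rintro rfl
      simp only [smul_zero, add_zero] at hyN
      rw [hx₀N] at hyN
      linarith
    have hz1 : z + x₀ ≠ 0 := by
      intro h
      have hz' : z = -x₀ := by
        have := eq_neg_of_add_eq_zero_left h
        simpa using this
      subst hz'
      rw [show x₀ + (2:ℝ) • (-x₀ : E) = -x₀ by module] at hyN
      rw [inner_neg_neg, hx₀N] at hyN
      linarith
    have h1 := min_le z hz hz0
    have h2 := min_le (z + x₀) (Λ.add_mem hz hx₀) hz1
    simp only [inner_add_left, inner_add_right, real_inner_smul_left,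
      real_inner_smul_right] at hyN h2 ⊢
    have hc := real_inner_comm z x₀
    linarith
  refine ⟨part1, ?_⟩
  rintro y hy y' hy' hyN hy'N hyc hy'c hne hne'
  have hP1 := part1 y hy hyN hyc
  have hP2 := part1 y' hy' hy'N hy'c
  obtain ⟨a, ha, hay⟩ := hyc
  obtain ⟨b, hb, hby⟩ := hy'c
  have hya : y = x₀ + (2 : ℝ) • a := sub_eq_iff_eq_add'.mp hay
  have hyb : y' = x₀ + (2 : ℝ) • b := sub_eq_iff_eq_add'.mp hby
  subst hya hyb
  have hab0 : a - b ≠ 0 := by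
    intro h
    exact hne (by rw [sub_eq_zero.mp h])
  have hw0 : a + b + x₀ ≠ 0 := by
    intro h
    apply hne'
    have : x₀ + (2:ℝ) • b = -(x₀ + (2:ℝ) • a) + (2:ℝ) • (a + b + x₀) := by module
    rw [this, h, smul_zero, add_zero]
  have h1 := min_le (a - b) (Λ.sub_mem ha hb) hab0
  have h2 := min_le (a + b + x₀) (Λ.add_mem (Λ.add_mem ha hb) hx₀) hw0
  obtain ⟨k, hk⟩ := hintegral a ha b hb
  obtain ⟨km, hkm⟩ := hmeven
  simp only [inner_add_left, inner_add_right, inner_sub_left, inner_sub_right,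
    real_inner_smul_left, real_inner_smul_right] at hyN hy'N hP1 hP2 h1 h2 ⊢
  have hcab := real_inner_comm a b
  have hcax := real_inner_comm a x₀
  have hcbx := real_inner_comm b x₀
  -- the inner product ⟪y, y'⟫ expanded:
  have hPval : ⟪x₀, x₀⟫_ℝ + 2 * ⟪x₀, b⟫_ℝ + (2 * ⟪a, x₀⟫_ℝ + 2 * (2 * ⟪a, b⟫_ℝ))
      = 4 * (k : ℝ) - 2 * m + 2 := by
    rw [hk] at hcab ⊢
    linarith
  have hPle : 4 * (k : ℝ) - 2 * m + 2 ≤ 2 := by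
    rw [hk] at hcab; linarith
  have hPge : (-2 : ℝ) ≤ 4 * (k : ℝ) - 2 * m + 2 := by
    rw [hk] at hcab; linarith
  have hub : ((k - km : ℤ) : ℝ) ≤ 0 := by push_cast; linarith
  have hlb : (-1 : ℝ) ≤ ((k - km : ℤ) : ℝ) := by push_cast; linarith
  have hub' : k - km ≤ 0 := by exact_mod_cast hub
  have hlb' : (-1 : ℤ) ≤ k - km := by exact_mod_cast hlb
  have hcase : k - km = 0 ∨ k - km = -1 := by omega
  rcases hcase with h | h
  · left
    have : (k : ℝ) = (km : ℝ) := by exact_mod_cast sub_eq_zero.mp h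
    linarith [hPval]
  · right
    have : (k : ℝ) - (km : ℝ) = -1 := by exact_mod_cast h
    linarith [hPval]
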